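/- Let G₁ and G₂ be finite simple graphs, each of which is palindromic or antipalindromic. Then the tensor product G₁ ⊗ G₂ is palindromic. -/

import Mathlib

open Polynomial

/-- The characteristic polynomial (of the adjacency matrix) of a finite simple graph. -/
noncomputable def charPoly {V : Type*} [Finite V] (G : SimpleGraph V) : Polynomial ℤ :=
  letI := Fintype.ofFinite V
  letI := Classical.decEq V
  letI := Classical.decRel G.Adj
  (SimpleGraph.adjMatrix ℤ G).charpoly

/-- `G` is palindromic: writing `χ_G(λ) = Σ a_i λ^(n-i)`, we have `a_i = a_(n-i)`;
equivalently the `i`-th and `(n-i)`-th coefficients agree for all `i ≤ n`. -/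
def IsPalindromic {V : Type*} [Finite V] (G : SimpleGraph V) : Prop :=
  ∀ i ≤ Nat.card V, (charPoly G).coeff i = (charPoly G).coeff (Nat.card V - i)

/-- `G` is antipalindromic: writing `χ_G(λ) = Σ a_i λ^(n-i)`, we have `a_i = -a_(n-i)`. -/
def IsAntipalindromic {V : Type*} [Finite V] (G : SimpleGraph V) : Prop :=
  ∀ i ≤ Nat.card V, (charPoly G).coeff i = -(charPoly G).coeff (Nat.card V - i)

/-- The tensor (Kronecker/categorical) product of two simple graphs. -/
def tensorProd {V W : Type*} (G : SimpleGraph V) (G' : SimpleGraph W) :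
    SimpleGraph (V × W) where
  Adj a b := G.Adj a.1 b.1 ∧ G'.Adj a.2 b.2
  symm := ⟨fun _ _ h => ⟨h.1.symm, h.2.symm⟩⟩
  loopless := ⟨fun a h => G.loopless.irrefl a.1 h.1⟩

/-! ### Auxiliary lemmas -/

open Matrix Finset Kronecker

section DetParity

variable {ι : Type*} [Fintype ι] [DecidableEq ι]

/-- A symmetric matrix with zero diagonal over `ZMod 2` of odd size is singular. -/
lemma aux_det_eq_zero_of_oddCard (B : Matrix ι ι (ZMod 2)) (hsymm : ∀ i j, B i j = B j i)
    (hdiag : ∀ i, B i i = 0) (hodd : Odd (Fintype.card ι)) : B.det = 0 := by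
  rw [Matrix.det_apply']
  apply Finset.sum_ninvolution (fun σ => σ⁻¹)
  · intro σ
    have h2 : ∏ i, B (σ⁻¹ i) i = ∏ i, B (σ i) i := by
      have h3 := Equiv.prod_comp σ (fun i => B (σ⁻¹ i) i)
      simp only [← Equiv.Perm.mul_apply, inv_mul_cancel, Equiv.Perm.one_apply] at h3
      rw [← h3]
      exact Finset.prod_congr rfl fun i _ => hsymm _ _
    rw [show σ⁻¹.sign = σ.sign by simp, h2]
    exact CharTwo.add_self_eq_zero _
  · intro σ hσ heq
    have hsq : σ ^ 2 ^ 1 = 1 := by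
      rw [pow_one, sq]
      nth_rewrite 1 [← heq]
      exact inv_mul_cancel σ
    have : ¬ (2 ∣ Fintype.card ι) :=
      fun hdvd => (Nat.not_odd_iff_even.mpr (even_iff_two_dvd.mpr hdvd)) hodd
    obtain ⟨a, ha⟩ := Equiv.Perm.exists_fixed_point_of_prime this hsq
    exact hσ (by rw [Finset.prod_eq_zero (Finset.mem_univ a) (by rw [ha]; exact hdiag a),
      mul_zero])
  · intro σ; exact Finset.mem_univ _
  · intro σ; exact inv_inv σ

/-- A graph whose characteristic polynomial has constant coefficient `±1` has evenly many
vertices. -/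
lemma aux_even_card_of_coeff {V : Type*} [Fintype V] [DecidableEq V] (G : SimpleGraph V)
    [DecidableRel G.Adj]
    (h : (G.adjMatrix ℤ).charpoly.coeff 0 = 1 ∨ (G.adjMatrix ℤ).charpoly.coeff 0 = -1) :
    Even (Fintype.card V) := by
  by_contra hodd
  rw [Nat.not_even_iff_odd] at hodd
  have h0 : ((G.adjMatrix ℤ).map (Int.castRingHom (ZMod 2))).det = 0 := by
    apply aux_det_eq_zero_of_oddCard
    · intro i j; simp [Matrix.map_apply, SimpleGraph.adjMatrix_apply, SimpleGraph.adj_comm]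
    · intro i; simp [Matrix.map_apply]
    · exact hodd
  rw [← RingHom.mapMatrix_apply, ← RingHom.map_det] at h0
  have hd : (G.adjMatrix ℤ).det = 1 ∨ (G.adjMatrix ℤ).det = -1 := by
    rw [Matrix.det_eq_sign_charpoly_coeff, hodd.neg_one_pow]
    rcases h with h | h <;> rw [h] <;> simp
  rcases hd with hd | hd <;> rw [hd] at h0 <;> revert h0 <;> decide

end DetParity

section PolyLemmas

/-- Coefficientwise (anti)palindromicity as an identity about `Polynomial.reverse`. -/
lemma aux_reverse_eq_iff {p : Polynomial ℤ} {n : ℕ} (hn : p.natDegree = n) (c : ℤ) :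
    (∀ i ≤ n, p.coeff i = c * p.coeff (n - i)) ↔ p.reverse = C c * p := by
  constructor
  · intro h
    ext k
    by_cases hk : k ≤ n
    · rw [coeff_reverse, hn, revAt_le hk, coeff_C_mul]
      have := h (n - k) (Nat.sub_le n k)
      rwa [Nat.sub_sub_self hk] at this
    · push_neg at hk
      rw [coeff_C_mul, p.coeff_eq_zero_of_natDegree_lt (hn ▸ hk), mul_zero,
        coeff_eq_zero_of_natDegree_lt (lt_of_le_of_lt (hn ▸ p.reverse_natDegree_le) hk)]
  · intro h i hi
    have h2 := congrArg (fun q => Polynomial.coeff q (n - i)) h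
    simp only [coeff_C_mul] at h2
    rwa [coeff_reverse, hn, revAt_le (Nat.sub_le n i), Nat.sub_sub_self hi] at h2

lemma aux_reverse_prod_finset {ι : Type*} (s : Finset ι) (f : ι → Polynomial ℝ) :
    (∏ i ∈ s, f i).reverse = ∏ i ∈ s, (f i).reverse := by
  classical
  induction s using Finset.cons_induction with
  | empty =>
    simp only [Finset.prod_empty]
    rw [show (1 : ℝ[X]) = C 1 by simp, Polynomial.reverse, reflect_C, natDegree_C, pow_zero,
      mul_one]
  | cons a s ha ih => rw [Finset.prod_cons, Finset.prod_cons, reverse_mul_of_domain, ih]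

lemma aux_reverse_X_sub_C (a : ℝ) : (X - C a).reverse = 1 - C a * X := by
  have h1 : (X - C a : ℝ[X]) = X ^ 1 + C (-a) := by rw [pow_one, map_neg, sub_eq_add_neg]
  rw [Polynomial.reverse, natDegree_X_sub_C, h1, reflect_add, reflect_monomial, reflect_C]
  rw [revAt_le (le_refl 1), Nat.sub_self, pow_zero, pow_one, map_neg]
  ring

lemma aux_factor_eq {a : ℝ} (ha : a ≠ 0) : (1 : ℝ[X]) - C a * X = C (-a) * (X - C a⁻¹) := by
  rw [mul_sub, ← C_mul, neg_mul, mul_inv_cancel₀ ha, map_neg, map_neg, C_1]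
  ring

lemma aux_prod_eq_multiset_X_sub_C {κ : Type*} [Fintype κ] (f : κ → ℝ) :
    ∏ j, (X - C (f j)) = ((Multiset.map f Finset.univ.val).map (fun a => X - C a)).prod := by
  rw [Multiset.map_map, Finset.prod_eq_multiset_prod]
  rfl

lemma aux_prod_congr_multiset {κ : Type*} [Fintype κ] {f g : κ → ℝ}
    (h : Multiset.map f Finset.univ.val = Multiset.map g Finset.univ.val)
    (F : ℝ → Polynomial ℝ) : ∏ j, F (f j) = ∏ j, F (g j) := by
  rw [Finset.prod_eq_multiset_prod, Finset.prod_eq_multiset_prod,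
    show Multiset.map (fun j => F (f j)) Finset.univ.val
      = (Multiset.map f Finset.univ.val).map F from (Multiset.map_map F f _).symm,
    show Multiset.map (fun j => F (g j)) Finset.univ.val
      = (Multiset.map g Finset.univ.val).map F from (Multiset.map_map F g _).symm, h]

/-- Extract the eigenvalue data from a reverse-identity for `∏ (X - C (ν j))`. -/
lemma aux_extract {κ : Type*} [Fintype κ] (ν : κ → ℝ) (c : ℝ) (hc : c = 1 ∨ c = -1)
    (H : (∏ j, (X - C (ν j))).reverse = C c * ∏ j, (X - C (ν j))) :
    (∀ j, ν j ≠ 0) ∧ (∏ j, -ν j) = c ∧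
      Multiset.map (fun j => (ν j)⁻¹) Finset.univ.val = Multiset.map ν Finset.univ.val := by
  rw [aux_reverse_prod_finset] at H
  simp only [aux_reverse_X_sub_C] at H
  have heval := congrArg (Polynomial.eval 0) H
  simp only [eval_prod, eval_mul, eval_sub, eval_one, eval_C, eval_X, mul_zero, sub_zero,
    Finset.prod_const_one, zero_sub] at heval
  have hprod : (∏ j, -ν j) = c := by
    rcases hc with h1 | h1 <;> rw [h1] at heval ⊢ <;> [linarith [heval]; linarith [heval]]
  have hne : ∀ j, ν j ≠ 0 := by
    intro j hj
    rw [Finset.prod_eq_zero (Finset.mem_univ j) (by rw [hj, neg_zero])] at hprod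
    rcases hc with h1 | h1 <;> rw [h1] at hprod <;> norm_num at hprod
  refine ⟨hne, hprod, ?_⟩
  have H2 : ∏ j, ((1 : ℝ[X]) - C (ν j) * X) = C c * ∏ j, (X - C (ν j)⁻¹) := by
    rw [Finset.prod_congr rfl (fun j _ => aux_factor_eq (hne j)), Finset.prod_mul_distrib,
      ← map_prod (C : ℝ →+* ℝ[X]) _ Finset.univ, hprod]
  rw [H2] at H
  have H3 := mul_left_cancel₀ (show (C c : ℝ[X]) ≠ 0 by
    rcases hc with h1 | h1 <;> rw [h1] <;> simp) H.symm
  have H4 := congrArg Polynomial.roots H3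
  rw [aux_prod_eq_multiset_X_sub_C, aux_prod_eq_multiset_X_sub_C, roots_multiset_prod_X_sub_C,
    roots_multiset_prod_X_sub_C] at H4
  exact H4.symm

lemma aux_pm_one_pow {x : ℝ} {k : ℕ} (hx : x = 1 ∨ x = -1) (hk : Even k) : x ^ k = 1 := by
  rcases hx with rfl | rfl
  · exact one_pow k
  · exact hk.neg_one_pow

/-- The key polynomial computation: if the products of linear factors for `μ` and `ν` satisfy
(anti)palindromic reverse-identities and both index types have even cardinality, then the
product of linear factors for all products `μ i * ν j` is palindromic. -/
lemma aux_key_reverse {ι κ : Type*} [Fintype ι] [Fintype κ] (μ : ι → ℝ) (ν : κ → ℝ) (c d : ℝ)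
    (hc : c = 1 ∨ c = -1) (hd : d = 1 ∨ d = -1)
    (hn : Even (Fintype.card ι)) (hm : Even (Fintype.card κ))
    (H₁ : (∏ i, (X - C (μ i))).reverse = C c * ∏ i, (X - C (μ i)))
    (H₂ : (∏ j, (X - C (ν j))).reverse = C d * ∏ j, (X - C (ν j))) :
    (∏ p : ι × κ, (X - C (μ p.1 * ν p.2))).reverse
      = ∏ p : ι × κ, (X - C (μ p.1 * ν p.2)) := by
  obtain ⟨hμne, hμprod, hS⟩ := aux_extract μ c hc H₁
  obtain ⟨hνne, hνprod, hT⟩ := aux_extract ν d hd H₂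
  have hμ : ∏ i, μ i = c := by
    have h5 : ∏ i, -μ i = (-1 : ℝ) ^ Fintype.card ι * ∏ i, μ i := by
      calc ∏ i, -μ i = ∏ i, ((-1) * μ i) := Finset.prod_congr rfl fun i _ => (neg_one_mul _).symm
        _ = (∏ _i : ι, (-1 : ℝ)) * ∏ i, μ i := Finset.prod_mul_distrib
        _ = (-1 : ℝ) ^ Fintype.card ι * ∏ i, μ i := by rw [Finset.prod_const, Finset.card_univ]
    rwa [h5, hn.neg_one_pow, one_mul] at hμprod
  have hne : ∀ p : ι × κ, μ p.1 * ν p.2 ≠ 0 := fun p => mul_ne_zero (hμne _) (hνne _)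
  rw [aux_reverse_prod_finset]
  simp only [aux_reverse_X_sub_C]
  rw [Finset.prod_congr rfl (fun p _ => aux_factor_eq (hne p)), Finset.prod_mul_distrib,
    ← map_prod (C : ℝ →+* ℝ[X]) _ Finset.univ]
  have hconst : ∏ p : ι × κ, -(μ p.1 * ν p.2) = 1 := by
    rw [Fintype.prod_prod_type]
    simp_rw [show ∀ (x y : ℝ), -(x * y) = x * (-y) from fun x y => by ring,
      Finset.prod_mul_distrib, Finset.prod_const, hνprod]
    rw [Finset.prod_pow, hμ, Finset.card_univ, Finset.card_univ, aux_pm_one_pow hc hm,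
      aux_pm_one_pow hd hn, one_mul]
  rw [hconst, C_1, one_mul]
  simp_rw [mul_inv]
  rw [Fintype.prod_prod_type]
  have step1 : ∀ i : ι, ∏ j, (X - C ((μ i)⁻¹ * (ν j)⁻¹)) = ∏ j, (X - C ((μ i)⁻¹ * ν j)) :=
    fun i => aux_prod_congr_multiset hT (fun b => X - C ((μ i)⁻¹ * b))
  rw [Finset.prod_congr rfl (fun i _ => step1 i)]
  have step2 : ∏ i, ∏ j, (X - C ((μ i)⁻¹ * ν j)) = ∏ i, ∏ j, (X - C (μ i * ν j)) :=
    aux_prod_congr_multiset (f := fun i => (μ i)⁻¹) (g := μ) hS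
      (fun a => ∏ j, (X - C (a * ν j)))
  rw [step2]
  exact (Fintype.prod_prod_type (fun p : ι × κ => X - C (μ p.1 * ν p.2))).symm

end PolyLemmas

section MatrixLemmas

variable {ι : Type*} [Fintype ι] [DecidableEq ι]

lemma aux_charpoly_diagonal {R : Type*} [CommRing R] (d : ι → R) :
    (Matrix.diagonal d).charpoly = ∏ i, (X - C (d i)) := by
  rw [Matrix.charpoly]
  have h : charmatrix (Matrix.diagonal d) = Matrix.diagonal (fun i => (X : R[X]) - C (d i)) := by
    ext i j
    by_cases h : i = j
    · subst h; simp [charmatrix_apply_eq]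
    · rw [charmatrix_apply_ne _ _ _ h, Matrix.diagonal_apply_ne _ h, Matrix.diagonal_apply_ne _ h,
        map_zero, neg_zero]
  rw [h, Matrix.det_diagonal]

lemma aux_charpoly_conj_eq {R : Type*} [CommRing R] (P M Q : Matrix ι ι R) (hPQ : P * Q = 1) :
    (P * M * Q).charpoly = M.charpoly := by
  have hmapPQ : P.map (C : R → R[X]) * Q.map C = 1 := by
    rw [← Matrix.map_mul, hPQ]
    exact Matrix.map_one _ (map_zero C) (map_one C)
  have key : charmatrix (P * M * Q) = P.map C * charmatrix M * Q.map C := by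
    unfold charmatrix
    rw [Matrix.mul_sub, Matrix.sub_mul]
    congr 1
    · rw [scalar_apply, ← Matrix.smul_one_eq_diagonal, Matrix.mul_smul, Matrix.smul_mul,
        mul_one, hmapPQ]
    · rw [RingHom.mapMatrix_apply, RingHom.mapMatrix_apply, Matrix.map_mul, Matrix.map_mul]
  unfold Matrix.charpoly
  rw [key, Matrix.det_mul, Matrix.det_mul, mul_comm, ← mul_assoc, ← Matrix.det_mul,
    mul_eq_one_comm.mp hmapPQ, Matrix.det_one, one_mul]

lemma aux_spectral_real (A : Matrix ι ι ℝ) (hA : A.IsHermitian) :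
    A = (hA.eigenvectorUnitary : Matrix ι ι ℝ) * Matrix.diagonal hA.eigenvalues
        * (star hA.eigenvectorUnitary : Matrix ι ι ℝ) := by
  conv_lhs => rw [hA.spectral_theorem]
  rfl

lemma aux_unitary_mul_star (A : Matrix ι ι ℝ) (hA : A.IsHermitian) :
    (hA.eigenvectorUnitary : Matrix ι ι ℝ) * (star hA.eigenvectorUnitary : Matrix ι ι ℝ)
      = 1 := by
  have h := hA.eigenvectorUnitary.2
  rw [Unitary.mem_iff] at h
  exact h.2

lemma aux_charpoly_eq_prod_eigenvalues (A : Matrix ι ι ℝ) (hA : A.IsHermitian) :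
    A.charpoly = ∏ i, (X - C (hA.eigenvalues i)) := by
  conv_lhs => rw [aux_spectral_real A hA]
  rw [aux_charpoly_conj_eq _ _ _ (aux_unitary_mul_star A hA), aux_charpoly_diagonal]

lemma aux_charpolyRev_map {R S : Type*} [CommRing R] [CommRing S] (M : Matrix ι ι R)
    (f : R →+* S) : (M.map f).charpolyRev = M.charpolyRev.map f := by
  unfold Matrix.charpolyRev
  rw [← Polynomial.coe_mapRingHom, RingHom.map_det, RingHom.mapMatrix_apply]
  congr 1
  ext i j
  by_cases h : i = j <;>
    simp [Matrix.sub_apply, Matrix.smul_apply, Matrix.one_apply, Matrix.map_apply, h,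
      smul_eq_mul]

end MatrixLemmas

section GraphLemmas

lemma aux_charPoly_eq {V : Type*} [Finite V] (G : SimpleGraph V) [Fintype V] [DecidableEq V]
    [DecidableRel G.Adj] : charPoly G = (G.adjMatrix ℤ).charpoly := by
  unfold charPoly
  congr!

lemma aux_adjMatrix_tensor {V W : Type*} [DecidableEq V] [DecidableEq W]
    (G₁ : SimpleGraph V) (G₂ : SimpleGraph W) [DecidableRel G₁.Adj] [DecidableRel G₂.Adj]
    [DecidableRel (tensorProd G₁ G₂).Adj] :
    (tensorProd G₁ G₂).adjMatrix ℤ = (G₁.adjMatrix ℤ) ⊗ₖ (G₂.adjMatrix ℤ) := by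
  ext ⟨a, b⟩ ⟨c, d⟩
  simp only [SimpleGraph.adjMatrix_apply, Matrix.kroneckerMap_apply]
  rw [if_congr (show (tensorProd G₁ G₂).Adj (a, b) (c, d) ↔ G₁.Adj a c ∧ G₂.Adj b d from Iff.rfl)
    rfl rfl]
  by_cases h1 : G₁.Adj a c <;> by_cases h2 : G₂.Adj b d <;> simp [h1, h2]

lemma aux_kronecker_map_cast {V W : Type*} (A : Matrix V V ℤ) (B : Matrix W W ℤ) :
    (A ⊗ₖ B).map ⇑(Int.castRingHom ℝ)
      = (A.map ⇑(Int.castRingHom ℝ)) ⊗ₖ (B.map ⇑(Int.castRingHom ℝ)) := by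
  ext ⟨a, b⟩ ⟨c, d⟩
  simp [Matrix.kroneckerMap_apply, Matrix.map_apply]

lemma aux_adjMatrix_isHermitian {V : Type*} [Fintype V] [DecidableEq V] (G : SimpleGraph V)
    [DecidableRel G.Adj] : ((G.adjMatrix ℤ).map ⇑(Int.castRingHom ℝ)).IsHermitian := by
  ext i j
  simp [Matrix.conjTranspose_apply, Matrix.map_apply, SimpleGraph.adj_comm]

/-- From an (anti)palindromicity hypothesis, extract the sign `c`, the evenness of the vertex
count, and the reverse-identity for the characteristic polynomial. -/
lemma aux_graph_data {V : Type*} [Finite V] (G : SimpleGraph V) [Fintype V] [DecidableEq V]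
    [DecidableRel G.Adj] (h : IsPalindromic G ∨ IsAntipalindromic G) :
    ∃ c : ℤ, (c = 1 ∨ c = -1) ∧ Even (Fintype.card V) ∧
      (G.adjMatrix ℤ).charpoly.reverse = C c * (G.adjMatrix ℤ).charpoly := by
  have hdeg : (G.adjMatrix ℤ).charpoly.natDegree = Fintype.card V :=
    (G.adjMatrix ℤ).charpoly_natDegree_eq_dim
  have hcard : Nat.card V = Fintype.card V := Nat.card_eq_fintype_card
  have hrev : ∃ c : ℤ, (c = 1 ∨ c = -1) ∧
      (G.adjMatrix ℤ).charpoly.reverse = C c * (G.adjMatrix ℤ).charpoly := by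
    rcases h with h | h
    · unfold IsPalindromic at h
      rw [aux_charPoly_eq] at h
      simp only [hcard] at h
      exact ⟨1, Or.inl rfl, (aux_reverse_eq_iff hdeg 1).mp
        (fun i hi => by rw [one_mul]; exact h i hi)⟩
    · unfold IsAntipalindromic at h
      rw [aux_charPoly_eq] at h
      simp only [hcard] at h
      exact ⟨-1, Or.inr rfl, (aux_reverse_eq_iff hdeg (-1)).mp
        (fun i hi => by rw [neg_one_mul]; exact h i hi)⟩
  obtain ⟨c, hc, hrev⟩ := hrev
  refine ⟨c, hc, ?_, hrev⟩
  have h0 : (G.adjMatrix ℤ).charpoly.coeff 0 = c := by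
    have h1 := congrArg (fun q => Polynomial.coeff q 0) hrev
    simp only [coeff_C_mul] at h1
    rw [coeff_reverse, revAt_le (Nat.zero_le _), Nat.sub_zero, hdeg, ← hdeg] at h1
    rw [Polynomial.Monic.coeff_natDegree (G.adjMatrix ℤ).charpoly_monic] at h1
    rcases hc with rfl | rfl
    · rw [one_mul] at h1; exact h1.symm
    · have := congrArg (fun x : ℤ => -x) h1
      simp only [neg_one_mul, neg_neg] at this
      rw [← this]
  apply aux_even_card_of_coeff G
  rw [h0]
  exact hc

end GraphLemmas

/-- The tensor product of two finite simple graphs, each palindromic or antipalindromic,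
is palindromic. -/
theorem tensorProd_palindromic {V W : Type*} [Finite V] [Finite W]
    (G₁ : SimpleGraph V) (G₂ : SimpleGraph W)
    (h₁ : IsPalindromic G₁ ∨ IsAntipalindromic G₁)
    (h₂ : IsPalindromic G₂ ∨ IsAntipalindromic G₂) :
    IsPalindromic (tensorProd G₁ G₂) := by
  letI : Fintype V := Fintype.ofFinite V
  letI : Fintype W := Fintype.ofFinite W
  letI : DecidableEq V := Classical.decEq V
  letI : DecidableEq W := Classical.decEq W
  letI : DecidableRel G₁.Adj := Classical.decRel _
  letI : DecidableRel G₂.Adj := Classical.decRel _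
  letI : DecidableRel (tensorProd G₁ G₂).Adj := Classical.decRel _
  obtain ⟨c, hc, hEvenV, Hrev1⟩ := aux_graph_data G₁ h₁
  obtain ⟨d, hd, hEvenW, Hrev2⟩ := aux_graph_data G₂ h₂
  set f : ℤ →+* ℝ := Int.castRingHom ℝ with hf
  set A₁' : Matrix V V ℝ := (G₁.adjMatrix ℤ).map ⇑f with hA1'
  set A₂' : Matrix W W ℝ := (G₂.adjMatrix ℤ).map ⇑f with hA2'
  have hH1 : A₁'.IsHermitian := aux_adjMatrix_isHermitian G₁
  have hH2 : A₂'.IsHermitian := aux_adjMatrix_isHermitian G₂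
  set μ : V → ℝ := hH1.eigenvalues with hμdef
  set ν : W → ℝ := hH2.eigenvalues with hνdef
  have hcp1 : A₁'.charpoly = ∏ i, (X - C (μ i)) := aux_charpoly_eq_prod_eigenvalues _ hH1
  have hcp2 : A₂'.charpoly = ∏ j, (X - C (ν j)) := aux_charpoly_eq_prod_eigenvalues _ hH2
  -- transfer the reverse-identities to ℝ
  have Hrev1' : (∏ i, (X - C (μ i))).reverse = C ((c : ℝ)) * ∏ i, (X - C (μ i)) := by
    rw [← hcp1, Matrix.reverse_charpoly, hA1', aux_charpolyRev_map, ← Matrix.reverse_charpoly,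
      Hrev1, Polynomial.map_mul, map_C, Matrix.charpoly_map]
    simp [hf]
  have Hrev2' : (∏ j, (X - C (ν j))).reverse = C ((d : ℝ)) * ∏ j, (X - C (ν j)) := by
    rw [← hcp2, Matrix.reverse_charpoly, hA2', aux_charpolyRev_map, ← Matrix.reverse_charpoly,
      Hrev2, Polynomial.map_mul, map_C, Matrix.charpoly_map]
    simp [hf]
  -- the Kronecker matrix
  set K : Matrix (V × W) (V × W) ℤ := (tensorProd G₁ G₂).adjMatrix ℤ with hKdef
  have hK : K = (G₁.adjMatrix ℤ) ⊗ₖ (G₂.adjMatrix ℤ) := aux_adjMatrix_tensor G₁ G₂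
  have hK' : K.map ⇑f = A₁' ⊗ₖ A₂' := by rw [hK]; exact aux_kronecker_map_cast _ _
  -- charpoly of the Kronecker product over ℝ
  have hcpK : (K.map ⇑f).charpoly = ∏ p : V × W, (X - C (μ p.1 * ν p.2)) := by
    rw [hK']
    conv_lhs => rw [aux_spectral_real A₁' hH1, aux_spectral_real A₂' hH2]
    rw [← hμdef, ← hνdef, Matrix.mul_kronecker_mul, Matrix.mul_kronecker_mul,
      aux_charpoly_conj_eq _ _ _ (by
        rw [← Matrix.mul_kronecker_mul, aux_unitary_mul_star A₁' hH1,
          aux_unitary_mul_star A₂' hH2, Matrix.one_kronecker_one]),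
      Matrix.diagonal_kronecker_diagonal, aux_charpoly_diagonal]
  -- the main computation over ℝ
  have hrevK' : (K.map ⇑f).charpoly.reverse = (K.map ⇑f).charpoly := by
    rw [hcpK]
    exact aux_key_reverse μ ν (c : ℝ) (d : ℝ)
      (by rcases hc with rfl | rfl <;> [left; right] <;> norm_num)
      (by rcases hd with rfl | rfl <;> [left; right] <;> norm_num)
      hEvenV hEvenW Hrev1' Hrev2'
  -- descend to ℤ
  have hrevK : K.charpoly.reverse = K.charpoly := by
    apply Polynomial.map_injective f Int.cast_injective
    rw [Matrix.reverse_charpoly, ← aux_charpolyRev_map, ← Matrix.reverse_charpoly,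
      ← Matrix.charpoly_map, hrevK']
  -- conclude
  intro i hi
  have hdegK : K.charpoly.natDegree = Fintype.card (V × W) := K.charpoly_natDegree_eq_dim
  have hcardVW : Nat.card (V × W) = Fintype.card (V × W) := Nat.card_eq_fintype_card
  have hiff := (aux_reverse_eq_iff hdegK 1).mpr (by rw [C_1, one_mul]; exact hrevK)
  have := hiff i (by rw [← hcardVW]; exact hi)
  rw [one_mul] at this
  rw [aux_charPoly_eq, hcardVW]
  exact this
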